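/- Let p > q > 0 be coprime and define d-increments via Δ(i) = (p - 1 - 2·[i]_p)/p, i.e., d(i+q) - d(i) = (p-1-2[i]_p)/p for a function d : ℤ/pℤ → ℚ. If s ∈ ℤ/pℤ satisfies d(s+q) = d(s-q) under the conjugation symmetry fixing s, then 2s ≡ q - 1 (mod p). In particular, if p is odd there is exactly one such s in ℤ/pℤ, and if p is even there are exactly two, namely (q-1)/2 and (p+q-1)/2. -/

import Mathlib

/-- Let `p > q > 0` be coprime and `d : ℤ/pℤ → ℚ` satisfy
`d (i+q) - d i = (p - 1 - 2·[i]_p)/p`. If `s` satisfies the symmetry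
`d (s+q) = d (s-q)`, then `2s ≡ q - 1 (mod p)`. Moreover, if `p` is odd there
is exactly one such `s`, and if `p` is even there are exactly two, namely
`(q-1)/2` and `(p+q-1)/2`. -/
theorem stmt_9 (p q : ℕ) (hq : 0 < q) (hqp : q < p) (hcop : Nat.Coprime p q)
    (d : ZMod p → ℚ)
    (hd : ∀ i : ZMod p, d (i + (q : ZMod p)) - d i =
      ((p : ℚ) - 1 - 2 * (i.val : ℚ)) / (p : ℚ)) :
    (∀ s : ZMod p, d (s + (q : ZMod p)) = d (s - (q : ZMod p)) →
      2 * s = (q : ZMod p) - 1) ∧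
    (Odd p → ∃! s : ZMod p, 2 * s = (q : ZMod p) - 1) ∧
    (Even p →
      {s : ZMod p | 2 * s = (q : ZMod p) - 1} =
        {(((q - 1) / 2 : ℕ) : ZMod p), (((p + q - 1) / 2 : ℕ) : ZMod p)} ∧
      (((q - 1) / 2 : ℕ) : ZMod p) ≠ (((p + q - 1) / 2 : ℕ) : ZMod p)) := by
  have hp : 0 < p := hq.trans hqp
  haveI : NeZero p := ⟨hp.ne'⟩
  have hp0 : (p : ℚ) ≠ 0 := Nat.cast_ne_zero.mpr hp.ne'
  have hqm1 : ((q - 1 : ℕ) : ZMod p) = (q : ZMod p) - 1 := by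
    have h1 : (1:ℕ) ≤ q := hq
    push_cast [Nat.cast_sub h1]
    ring
  refine ⟨?_, ?_, ?_⟩
  · intro s hs
    have h1 := hd s
    have h2 := hd (s - (q : ZMod p))
    rw [sub_add_cancel] at h2
    rw [hs] at h1
    have hsum : ((p:ℚ) - 1 - 2*(s.val:ℚ))/p + ((p:ℚ)-1-2*((s - (q:ZMod p)).val:ℚ))/p = 0 := by
      rw [← h1, ← h2]; ring
    have hval : (s.val : ℚ) + ((s - (q:ZMod p)).val : ℚ) = (p:ℚ) - 1 := by
      rw [← add_div, div_eq_zero_iff] at hsum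
      rcases hsum with h | h
      · linarith
      · exact absurd h hp0
    have hnat : s.val + (s - (q:ZMod p)).val = p - 1 := by
      have hc : ((s.val + (s - (q:ZMod p)).val : ℕ) : ℚ) = ((p - 1 : ℕ) : ℚ) := by
        push_cast [Nat.cast_sub hp]
        linarith
      exact_mod_cast hc
    have key : 2 * s = ((p - 1 : ℕ) : ZMod p) + (q : ZMod p) := by
      have e1 : (s.val : ZMod p) = s := by simp [ZMod.natCast_val, ZMod.cast_id]
      have e2 : (((s - (q:ZMod p)).val : ℕ) : ZMod p) = s - (q:ZMod p) := by
        simp [ZMod.natCast_val, ZMod.cast_id]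
      calc 2 * s = (s.val : ZMod p) + (((s - (q:ZMod p)).val : ℕ) : ZMod p) + q := by
            rw [e1, e2]; ring
        _ = ((s.val + (s - (q:ZMod p)).val : ℕ) : ZMod p) + q := by push_cast; ring
        _ = ((p - 1 : ℕ) : ZMod p) + q := by rw [hnat]
    rw [key]
    have hm1 : ((p - 1 : ℕ) : ZMod p) = -1 := by
      rw [Nat.cast_sub hp]
      simp
    rw [hm1]; ring
  · intro hodd
    have hu : IsUnit (2 : ZMod p) := by
      rw [show ((2:ZMod p)) = ((2:ℕ) : ZMod p) by push_cast; ring,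
        ZMod.isUnit_iff_coprime]
      exact Nat.coprime_two_left.mpr hodd
    obtain ⟨u, hu⟩ := hu
    refine ⟨(↑u⁻¹ : ZMod p) * ((q : ZMod p) - 1), ?_, ?_⟩
    · show 2 * ((↑u⁻¹ : ZMod p) * ((q : ZMod p) - 1)) = (q : ZMod p) - 1
      rw [← hu, ← mul_assoc, Units.mul_inv, one_mul]
    · intro y hy
      have h := congrArg (fun z => (↑u⁻¹ : ZMod p) * z) hy
      rw [← mul_assoc, ← hu, Units.inv_mul, one_mul] at h
      exact h
  · intro heven
    have hqodd : Odd q := by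
      rcases Nat.even_or_odd q with he | ho
      · exfalso
        have hg : (2:ℕ) ∣ Nat.gcd p q := Nat.dvd_gcd heven.two_dvd he.two_dvd
        rw [hcop] at hg
        omega
      · exact ho
    have h2a : 2 * ((q - 1) / 2) = q - 1 := by
      obtain ⟨m, hm⟩ := hqodd
      omega
    have h2b : 2 * ((p + q - 1) / 2) = p + q - 1 := by
      obtain ⟨k, hk⟩ := heven
      obtain ⟨m, hm⟩ := hqodd
      omega
    have hbval : (p + q - 1) / 2 = p / 2 + (q - 1) / 2 := by
      obtain ⟨k, hk⟩ := heven
      obtain ⟨m, hm⟩ := hqodd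
      omega
    have hcasta : 2 * (((q - 1) / 2 : ℕ) : ZMod p) = (q : ZMod p) - 1 := by
      rw [← hqm1]
      exact_mod_cast congrArg (Nat.cast : ℕ → ZMod p) h2a
    have hhalf : ((p / 2 : ℕ) : ZMod p) ≠ 0 := by
      rw [Ne, ZMod.natCast_eq_zero_iff]
      intro hdvd
      have h1 : 0 < p / 2 := by omega
      have h2 : p / 2 < p := by omega
      exact absurd (Nat.le_of_dvd h1 hdvd) (not_le.mpr h2)
    have h2half : 2 * ((p / 2 : ℕ) : ZMod p) = 0 := by
      have hpc : ((2 * (p/2) : ℕ) : ZMod p) = ((p : ℕ) : ZMod p) := by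
        congr 1
        obtain ⟨k, hk⟩ := heven
        omega
      rw [ZMod.natCast_self] at hpc
      push_cast at hpc
      linear_combination hpc
    constructor
    · ext s
      simp only [Set.mem_setOf_eq, Set.mem_insert_iff, Set.mem_singleton_iff]
      constructor
      · intro hs
        have hdiff : 2 * (s - (((q - 1) / 2 : ℕ) : ZMod p)) = 0 := by
          rw [mul_sub, hs, hcasta, sub_self]
        set t := s - (((q - 1) / 2 : ℕ) : ZMod p) with ht
        have hdvd : p ∣ 2 * t.val := by
          have hz : ((2 * t.val : ℕ) : ZMod p) = 0 := by
            push_cast [ZMod.natCast_val, ZMod.cast_id]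
            exact hdiff
          exact (ZMod.natCast_eq_zero_iff _ _).mp hz
        have hlt : t.val < p := ZMod.val_lt t
        have hcases : 2 * t.val = 0 ∨ 2 * t.val = p := by
          rcases hdvd with ⟨c, hc⟩
          have hc2 : c = 0 ∨ c = 1 := by
            by_contra hcc
            push_neg at hcc
            have : 2 ≤ c := by omega
            nlinarith
          rcases hc2 with rfl | rfl <;> omega
        rcases hcases with h0 | hpd
        · left
          have hv0 : t.val = 0 := by omega
          have ht0 : t = 0 := (ZMod.val_eq_zero t).mp hv0
          have := sub_eq_zero.mp (ht ▸ ht0)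
          exact this
        · right
          have htv : t.val = p / 2 := by omega
          have htc : t = ((p / 2 : ℕ) : ZMod p) := by
            have e3 : ((t.val : ℕ) : ZMod p) = t := by simp [ZMod.natCast_val, ZMod.cast_id]
            rw [← e3, htv]
          have hse : s = (((q-1)/2 : ℕ) : ZMod p) + ((p/2 : ℕ) : ZMod p) := by
            have h := ht ▸ htc
            linear_combination h
          rw [hse, hbval]
          push_cast
          ring
      · intro hs
        rcases hs with h | h
        · rw [h]; exact hcasta
        · rw [h, hbval]
          push_cast
          push_cast at hcasta h2half
          linear_combination hcasta + h2half
    · intro habs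
      apply hhalf
      rw [hbval] at habs
      push_cast at habs
      linear_combination -habs
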